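/- Generalized series law: let G be a finite network, H₁,…,Hₙ subgraphs of G, Aᵢ, Zᵢ disjoint vertex sets in Hᵢ, and A, Z disjoint vertex sets in G. Suppose that for every choice of paths Pᵢ within Hᵢ connecting Aᵢ to Zᵢ (for each i), the union ⋃ᵢ Pᵢ contains a path from A to Z. Then R_G(A, Z) ≤ ∑_{i=1}^n R_{Hᵢ}(Aᵢ, Zᵢ). -/

import Mathlib

open Finset

/-- A unit flow from the vertex set `A` to the vertex set `Z` on the graph `G`
(`A` and `Z` are each identified with a single vertex): antisymmetric, supported
on edges of `G`, divergence-free outside `A ∪ Z`, and with total outflow `1`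
from `A`. -/
def IsUnitFlowBetween {V : Type*} [Fintype V] (G : SimpleGraph V)
    (A Z : Finset V) (θ : V → V → ℝ) : Prop :=
  (∀ x y, θ x y = -θ y x) ∧
  (∀ x y, ¬ G.Adj x y → θ x y = 0) ∧
  (∀ x, x ∉ A → x ∉ Z → ∑ y, θ x y = 0) ∧
  ∑ x ∈ A, ∑ y, θ x y = 1

/-- Dirichlet energy of a flow with respect to edge resistances `r`. -/
noncomputable def flowEnergy {V : Type*} [Fintype V] (r : Sym2 V → ℝ)
    (θ : V → V → ℝ) : ℝ :=
  (1 / 2) * ∑ x, ∑ y, (θ x y) ^ 2 * r s(x, y)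

/-- Effective resistance between the vertex sets `A` and `Z` in the graph `G`. -/
noncomputable def effResBetween {V : Type*} [Fintype V] (G : SimpleGraph V)
    (r : Sym2 V → ℝ) (A Z : Finset V) : ℝ :=
  sInf (flowEnergy r '' {θ | IsUnitFlowBetween G A Z θ})

set_option linter.unusedSectionVars false
set_option maxHeartbeats 1000000

section AuxSeriesLaw
variable {V : Type*} [Fintype V] [DecidableEq V]


/-- Flow of one unit along a walk. -/
noncomputable def walkFlow {G : SimpleGraph V} {u v : V} (W : G.Walk u v) (x y : V) : ℝ :=
  (((W.darts.map SimpleGraph.Dart.toProd).count (x, y) : ℝ))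
    - (((W.darts.map SimpleGraph.Dart.toProd).count (y, x) : ℝ))

lemma walkFlow_antisymm {G : SimpleGraph V} {u v : V} (W : G.Walk u v) (x y : V) :
    walkFlow W x y = - walkFlow W y x := by
  simp [walkFlow]

lemma walkFlow_support {G : SimpleGraph V} {u v : V} (W : G.Walk u v) (x y : V)
    (h : ¬ G.Adj x y) : walkFlow W x y = 0 := by
  have key : ∀ p q : V, ¬ G.Adj p q → (W.darts.map SimpleGraph.Dart.toProd).count (p, q) = 0 := by
    intro p q hpq
    rw [List.count_eq_zero]
    intro hmem
    obtain ⟨d, _, hd⟩ := List.mem_map.mp hmem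
    have h' : G.Adj d.toProd.1 d.toProd.2 := d.adj
    rw [hd] at h'
    exact hpq h'
  simp [walkFlow, key x y h, key y x fun hh => h hh.symm]

lemma walkFlow_cons {G : SimpleGraph V} {u b v : V} (h : G.Adj u b) (W : G.Walk b v) (x y : V) :
    walkFlow (SimpleGraph.Walk.cons h W) x y =
      walkFlow W x y + (if (u, b) = (x, y) then 1 else 0) - (if (u, b) = (y, x) then 1 else 0) := by
  simp only [walkFlow, SimpleGraph.Walk.darts_cons, List.map_cons, List.count_cons, beq_iff_eq]
  split_ifs <;> push_cast <;> ring

lemma walkFlow_div {G : SimpleGraph V} {u v : V} (W : G.Walk u v) (x : V) :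
    ∑ y, walkFlow W x y = (if x = u then 1 else 0) - (if x = v then 1 else 0) := by
  induction W with
  | nil => simp [walkFlow]
  | @cons u b v h W ih =>
    simp only [walkFlow_cons, Finset.sum_sub_distrib, Finset.sum_add_distrib, ih]
    have e1 : ∑ y, (if (u, b) = (x, y) then (1:ℝ) else 0) = if x = u then 1 else 0 := by
      by_cases hx : x = u
      · subst hx
        simp [Prod.ext_iff]
      · rw [if_neg hx]
        apply Finset.sum_eq_zero
        intro y _
        rw [if_neg]
        simp only [Prod.mk.injEq, not_and]
        intro hux; exact absurd hux.symm hx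
    have e2 : ∑ y, (if (u, b) = (y, x) then (1:ℝ) else 0) = if x = b then 1 else 0 := by
      by_cases hx : x = b
      · subst hx
        simp [Prod.ext_iff]
      · rw [if_neg hx]
        apply Finset.sum_eq_zero
        intro y _
        rw [if_neg]
        simp only [Prod.mk.injEq, not_and]
        intro _ hbx; exact absurd hbx.symm hx
    rw [e1, e2]
    ring


/-- the sum of an antisymmetric function over a square is zero -/
lemma antisym_square_sum {θ : V → V → ℝ} (hanti : ∀ x y, θ x y = -θ y x) (s : Finset V) :
    ∑ x ∈ s, ∑ y ∈ s, θ x y = 0 := by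
  have h1 : ∑ x ∈ s, ∑ y ∈ s, θ x y = ∑ y ∈ s, ∑ x ∈ s, θ x y := Finset.sum_comm
  have h2 : ∑ y ∈ s, ∑ x ∈ s, θ x y = - ∑ x ∈ s, ∑ y ∈ s, θ x y := by
    rw [← Finset.sum_neg_distrib]
    apply Finset.sum_congr rfl
    intro y _
    rw [← Finset.sum_neg_distrib]
    apply Finset.sum_congr rfl
    intro x _
    rw [hanti x y]
  linarith [h1.trans h2]

/-- cut decomposition: a flow's total divergence over a set `T` equals the flow
across the boundary of `T`. -/
lemma sum_div_eq_cross {θ : V → V → ℝ} (hanti : ∀ x y, θ x y = -θ y x) (T : Finset V) :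
    ∑ x ∈ T, ∑ y, θ x y = ∑ x ∈ T, ∑ y ∈ Tᶜ, θ x y := by
  have : ∀ x ∈ T, ∑ y, θ x y = ∑ y ∈ T, θ x y + ∑ y ∈ Tᶜ, θ x y := by
    intro x _
    rw [← Finset.sum_add_sum_compl T]
  rw [Finset.sum_congr rfl this, Finset.sum_add_distrib, antisym_square_sum hanti T, zero_add]

lemma cut_bound {θ w : V → V → ℝ} (T SF : Finset V)
    (hanti : ∀ x y, θ x y = -θ y x)
    (hw : ∀ x y, |θ x y| ≤ w x y) (hw0 : ∀ x y, 0 ≤ w x y)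
    (hcross : ∀ x ∈ T, ∀ y ∈ Tᶜ, θ x y ≠ 0 → ((x ∈ SF ∧ y ∉ SF) ∨ (x ∉ SF ∧ y ∈ SF))) :
    ∑ x ∈ T, ∑ y ∈ Tᶜ, θ x y ≤ ∑ x ∈ SF, ∑ y ∈ SFᶜ, w x y := by
  classical
  rw [← Finset.sum_product' (s := T) (t := Tᶜ) (f := fun x y => θ x y),
      ← Finset.sum_product' (s := SF) (t := SFᶜ) (f := fun x y => w x y)]
  set D := (T ×ˢ Tᶜ).filter (fun p => θ p.1 p.2 ≠ 0) with hD
  have step1 : ∑ p ∈ T ×ˢ Tᶜ, θ p.1 p.2 = ∑ p ∈ D, θ p.1 p.2 :=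
    (Finset.sum_filter_of_ne (fun p _ hp => hp)).symm
  set φ : V × V → V × V := fun p => if p.1 ∈ SF then p else p.swap with hφ
  have hmemD : ∀ p ∈ D, p.1 ∈ T ∧ p.2 ∈ Tᶜ ∧ θ p.1 p.2 ≠ 0 := by
    intro p hp
    rw [hD, Finset.mem_filter, Finset.mem_product] at hp
    exact ⟨hp.1.1, hp.1.2, hp.2⟩
  have hφmem : ∀ p ∈ D, φ p ∈ SF ×ˢ SFᶜ := by
    intro p hp
    obtain ⟨h1, h2, h3⟩ := hmemD p hp
    rcases hcross p.1 h1 p.2 h2 h3 with ⟨ha, hb⟩ | ⟨ha, hb⟩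
    · rw [hφ]; simp only [if_pos ha]
      exact Finset.mem_product.mpr ⟨ha, Finset.mem_compl.mpr hb⟩
    · rw [hφ]; simp only [if_neg ha]
      exact Finset.mem_product.mpr ⟨hb, Finset.mem_compl.mpr ha⟩
  have hinj : ∀ p ∈ D, ∀ q ∈ D, φ p = φ q → p = q := by
    intro p hp q hq hpq
    obtain ⟨hp1, hp2, -⟩ := hmemD p hp
    obtain ⟨hq1, hq2, -⟩ := hmemD q hq
    rw [hφ] at hpq
    simp only at hpq
    split_ifs at hpq
    · exact hpq
    · exfalso
      have : p.2 = q.1 := by rw [hpq]; rfl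
      rw [Finset.mem_compl] at hp2
      exact hp2 (this ▸ hq1)
    · exfalso
      have : p.1 = q.2 := by rw [← hpq]; rfl
      rw [Finset.mem_compl] at hq2
      exact hq2 (this ▸ hp1)
    · have := congrArg Prod.swap hpq
      simpa using this
  calc ∑ p ∈ T ×ˢ Tᶜ, θ p.1 p.2 = ∑ p ∈ D, θ p.1 p.2 := step1
    _ ≤ ∑ p ∈ D, |θ p.1 p.2| := Finset.sum_le_sum (fun p _ => le_abs_self _)
    _ = ∑ p ∈ D.image φ, |θ p.1 p.2| := by
        rw [Finset.sum_image hinj]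
        apply Finset.sum_congr rfl
        intro p _
        rw [hφ]
        by_cases hc : p.1 ∈ SF
        · simp only [if_pos hc]
        · simp only [if_neg hc, Prod.fst_swap, Prod.snd_swap, hanti p.2 p.1, abs_neg]
    _ ≤ ∑ p ∈ D.image φ, w p.1 p.2 := Finset.sum_le_sum (fun p _ => hw p.1 p.2)
    _ ≤ ∑ p ∈ SF ×ˢ SFᶜ, w p.1 p.2 := by
        apply Finset.sum_le_sum_of_subset_of_nonneg
        · intro p hp
          obtain ⟨q, hq, hq'⟩ := Finset.mem_image.mp hp
          exact hq' ▸ hφmem q hq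
        · intro p _ _
          exact hw0 _ _


lemma sum_ite_pair (u b c : V) (δ : ℝ) :
    ∑ y, (if (u, y) = (b, c) then δ else 0) = if u = b then δ else 0 := by
  by_cases hu : u = b
  · subst hu
    simp [Prod.ext_iff]
  · rw [if_neg hu]
    apply Finset.sum_eq_zero
    intro y _
    rw [if_neg]
    simp only [Prod.mk.injEq, not_and]
    intro h; exact absurd h hu

/-- Existence of a maximum flow together with its min-cut structure. -/
lemma exists_maxflow_cut (w : V → V → ℝ) (hw0 : ∀ x y, 0 ≤ w x y)
    (hwsymm : ∀ x y, w x y = w y x) (A Z : Finset V) (hAZ : Disjoint A Z) :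
    ∃ (f : V → V → ℝ) (S : Set V),
      (∀ x y, f x y = -f y x) ∧ (∀ x y, |f x y| ≤ w x y) ∧
      (∀ x, x ∉ A → x ∉ Z → ∑ y, f x y = 0) ∧
      (∀ a ∈ A, a ∈ S) ∧ (∀ z ∈ Z, z ∉ S) ∧
      (∀ x y, x ∈ S → y ∉ S → f x y = w x y) := by
  classical
  set Φ : Set (V → V → ℝ) := {f | (∀ x y, f x y = -f y x) ∧ (∀ x y, |f x y| ≤ w x y) ∧
      (∀ x, x ∉ A → x ∉ Z → ∑ y, f x y = 0)} with hΦ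
  set val : (V → V → ℝ) → ℝ := fun f => ∑ x ∈ A, ∑ y, f x y with hval
  have hev : ∀ x y : V, Continuous (fun f : V → V → ℝ => f x y) := fun x y =>
    (continuous_apply y).comp (continuous_apply x)
  have hclosed : IsClosed Φ := by
    have e : Φ = (⋂ x, ⋂ y, {f : V → V → ℝ | f x y = -f y x}) ∩
        ((⋂ x, ⋂ y, {f : V → V → ℝ | |f x y| ≤ w x y}) ∩
         (⋂ x ∈ {x : V | x ∉ A ∧ x ∉ Z}, {f : V → V → ℝ | ∑ y, f x y = 0})) := by
      ext f
      simp only [hΦ, Set.mem_inter_iff, Set.mem_iInter, Set.mem_setOf_eq]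
      constructor
      · rintro ⟨h1, h2, h3⟩
        exact ⟨h1, h2, fun x hx => h3 x hx.1 hx.2⟩
      · rintro ⟨h1, h2, h3⟩
        exact ⟨h1, h2, fun x hx1 hx2 => h3 x ⟨hx1, hx2⟩⟩
    rw [e]
    refine IsClosed.inter ?_ (IsClosed.inter ?_ ?_)
    · exact isClosed_iInter fun x => isClosed_iInter fun y =>
        isClosed_eq (hev x y) (hev y x).neg
    · exact isClosed_iInter fun x => isClosed_iInter fun y =>
        isClosed_le (hev x y).abs continuous_const
    · exact isClosed_iInter fun x => isClosed_iInter fun _ =>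
        isClosed_eq (continuous_finset_sum _ fun y _ => hev x y) continuous_const
  have hbdd : Bornology.IsBounded Φ := by
    set R : ℝ := ∑ x, ∑ y, w x y with hR
    have hR0 : 0 ≤ R := Finset.sum_nonneg fun x _ => Finset.sum_nonneg fun y _ => hw0 x y
    have hwR : ∀ x y, w x y ≤ R := by
      intro x y
      calc w x y ≤ ∑ y', w x y' :=
            Finset.single_le_sum (fun y' _ => hw0 x y') (Finset.mem_univ y)
        _ ≤ R := Finset.single_le_sum
            (fun x' _ => Finset.sum_nonneg fun y' _ => hw0 x' y') (Finset.mem_univ x)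
    apply Bornology.IsBounded.subset (Metric.isBounded_closedBall (x := (0 : V → V → ℝ)) (r := R))
    intro f hf
    rw [Metric.mem_closedBall]
    rw [dist_pi_le_iff hR0]
    intro x
    rw [dist_pi_le_iff hR0]
    intro y
    have : dist (f x y) 0 = |f x y| := by simp [Real.dist_eq]
    rw [Pi.zero_apply, Pi.zero_apply] at *
    rw [this]
    exact (hf.2.1 x y).trans (hwR x y)
  have hcompact : IsCompact Φ := Metric.isCompact_of_isClosed_isBounded hclosed hbdd
  have hne : Φ.Nonempty := by
    refine ⟨0, fun x y => by simp, fun x y => by simpa using hw0 x y, fun x _ _ => by simp⟩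
  have hvalcont : Continuous val :=
    continuous_finset_sum _ fun x _ => continuous_finset_sum _ fun y _ => hev x y
  obtain ⟨f, hfΦ, hfmax⟩ := hcompact.exists_isMaxOn hne hvalcont.continuousOn
  obtain ⟨hf1, hf2, hf3⟩ := hfΦ
  set step : V → V → Prop := fun p q => f p q < w p q with hstep
  set S : Set V := {x | ∃ a ∈ A, Relation.ReflTransGen step a x} with hS
  refine ⟨f, S, hf1, hf2, hf3, ?_, ?_, ?_⟩
  · intro a ha
    exact ⟨a, ha, Relation.ReflTransGen.refl⟩
  · -- Z avoids S, by the augmenting argument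
    intro z hz hzS
    obtain ⟨a, ha, hchain⟩ := hzS
    have aug : ∀ x : V, Relation.ReflTransGen step a x →
        ∃ δ₀ > (0:ℝ), ∃ C ≥ (0:ℝ), ∀ δ : ℝ, 0 < δ → δ ≤ δ₀ →
          ∃ g : V → V → ℝ, (∀ p q, g p q = -g q p) ∧ (∀ p q, |g p q| ≤ w p q) ∧
            (∀ p q, |g p q - f p q| ≤ C * δ) ∧
            (∀ u, ∑ y, g u y =
              (∑ y, f u y) + (if u = a then δ else 0) - (if u = x then δ else 0)) := by
      intro x hx
      induction hx with
      | refl =>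
          exact ⟨1, one_pos, 0, le_refl 0, fun δ hδ _ =>
            ⟨f, hf1, hf2, fun p q => by simp, fun u => by ring⟩⟩
      | @tail b c hab hbc ih =>
          obtain ⟨δ₀, hδ₀, C, hC, hg⟩ := ih
          have hρ : 0 < w b c - f b c := sub_pos.mpr hbc
          refine ⟨min δ₀ ((w b c - f b c) / (C + 1)), by positivity, C + 1, by positivity, ?_⟩
          intro δ hδ hδle
          obtain ⟨g, hg1, hg2, hg3, hg4⟩ := hg δ hδ (hδle.trans (min_le_left _ _))
          have hδρ : (C + 1) * δ ≤ w b c - f b c := by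
            have h1 : δ ≤ (w b c - f b c) / (C + 1) := hδle.trans (min_le_right _ _)
            have h2 : (0:ℝ) < C + 1 := by positivity
            calc (C + 1) * δ ≤ (C + 1) * ((w b c - f b c) / (C + 1)) := by
                  exact mul_le_mul_of_nonneg_left h1 (le_of_lt h2)
              _ = w b c - f b c := by field_simp
          set g' : V → V → ℝ := fun p q =>
            g p q + (if (p, q) = (b, c) then δ else 0) - (if (p, q) = (c, b) then δ else 0)
            with hg'
          have key : ∀ p q, g' p q =
              g p q + (if (p, q) = (b, c) then δ else 0) - (if (p, q) = (c, b) then δ else 0) :=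
            fun p q => rfl
          have hgbc : |g b c - f b c| ≤ C * δ := hg3 b c
          have hbound : |g b c + δ| ≤ w b c := by
            rw [abs_le] at hgbc ⊢
            have := hg2 b c
            rw [abs_le] at this
            constructor <;> nlinarith [hw0 b c]
          refine ⟨g', ?_, ?_, ?_, ?_⟩
          · intro p q
            have c1 : ((q, p) = (b, c)) = ((p, q) = (c, b)) := by
              simp only [Prod.mk.injEq, eq_iff_iff]; tauto
            have c2 : ((q, p) = (c, b)) = ((p, q) = (b, c)) := by
              simp only [Prod.mk.injEq, eq_iff_iff]; tauto
            simp only [key, c1, c2, hg1 p q]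
            ring
          · intro p q
            by_cases h1 : (p, q) = (b, c)
            · injection h1 with hp hq
              subst hp; subst hq
              by_cases hbc : p = q
              · subst hbc
                have : g' p p = g p p := by rw [key]; simp
                rw [this]; exact hg2 p p
              · have h2 : ¬ ((p, q) = (q, p)) := by
                  simp only [Prod.mk.injEq, not_and]
                  intro h _; exact hbc h
                have : g' p q = g p q + δ := by rw [key, if_pos rfl, if_neg h2]; ring
                rw [this]; exact hbound
            · by_cases h2 : (p, q) = (c, b)
              · injection h2 with hp hq
                subst hp; subst hq
                have hbc : q ≠ p := by
                  intro h
                  exact h1 (by rw [h])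
                have : g' p q = -(g q p + δ) := by
                  rw [key, if_neg h1, if_pos rfl, hg1 p q]; ring
                rw [this, abs_neg, hwsymm p q]
                exact hbound
              · have : g' p q = g p q := by rw [key, if_neg h1, if_neg h2]; ring
                rw [this]; exact hg2 p q
          · intro p q
            rw [key]
            have h := hg3 p q
            rw [abs_le] at h
            split_ifs <;> (rw [abs_le]; constructor <;> nlinarith)
          · intro u
            have e1 : ∑ y, g' u y = (∑ y, g u y) + (if u = b then δ else 0)
                - (if u = c then δ else 0) := by
              simp only [key, Finset.sum_sub_distrib, Finset.sum_add_distrib,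
                sum_ite_pair u b c δ, sum_ite_pair u c b δ]
            rw [e1, hg4 u]
            split_ifs <;> ring
    obtain ⟨δ₀, hδ₀, C, hC, hg⟩ := aug z hchain
    obtain ⟨g, hg1, hg2, hg4div⟩ := hg δ₀ hδ₀ le_rfl
    obtain ⟨hg3, hg4⟩ := hg4div
    have hgΦ : g ∈ Φ := by
      refine ⟨hg1, hg2, ?_⟩
      intro u huA huZ
      have hua : u ≠ a := fun h => huA (h ▸ ha)
      have huz : u ≠ z := fun h => huZ (h ▸ hz)
      rw [hg4 u, if_neg hua, if_neg huz, hf3 u huA huZ]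
      ring
    have hval : val g = val f + δ₀ := by
      rw [hval]
      simp only
      have : ∀ u ∈ A, ∑ y, g u y =
          (∑ y, f u y) + (if u = a then δ₀ else 0) - (if u = z then δ₀ else 0) :=
        fun u _ => hg4 u
      rw [Finset.sum_congr rfl this, Finset.sum_sub_distrib, Finset.sum_add_distrib]
      have ea : ∑ u ∈ A, (if u = a then δ₀ else 0) = δ₀ := by
        rw [Finset.sum_ite_eq' A a (fun _ => δ₀)]
        exact if_pos ha
      have ez : ∑ u ∈ A, (if u = z then δ₀ else 0) = 0 := by
        apply Finset.sum_eq_zero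
        intro u hu
        rw [if_neg]
        intro h
        exact (Finset.disjoint_left.mp hAZ (h ▸ hu)) hz
      rw [ea, ez]
      ring
    have := hfmax hgΦ
    simp only [Set.mem_setOf_eq] at this
    rw [hval] at this
    linarith
  · intro x y hxS hyS
    have hle : f x y ≤ w x y := (le_abs_self _).trans (hf2 x y)
    rcases lt_or_eq_of_le hle with hlt | heq
    · exfalso
      obtain ⟨a, ha, hchain⟩ := hxS
      exact hyS ⟨a, ha, hchain.tail hlt⟩
    · exact heq


lemma mem_S_of_walk {G : SimpleGraph V} (S : Set V) {u w : V} (Q : G.Walk u w)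
    (hNC : ∀ e ∈ Q.edges, ∀ x y : V, e = s(x, y) → (x ∈ S ↔ y ∈ S)) (hu : u ∈ S) : w ∈ S := by
  induction Q with
  | nil => exact hu
  | @cons u b v h Q ih =>
    refine ih ?_ ?_
    · intro e he x y hxy
      exact hNC e (by rw [SimpleGraph.Walk.edges_cons]; exact List.mem_cons_of_mem _ he) x y hxy
    · exact (hNC s(u, b) (by rw [SimpleGraph.Walk.edges_cons]; exact List.mem_cons_self)
        u b rfl).mp hu
lemma exists_unitFlow_of_reachable {G : SimpleGraph V} {A Z : Finset V} (hAZ : Disjoint A Z)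
    {a z : V} (ha : a ∈ A) (hz : z ∈ Z) (h : G.Reachable a z) :
    ∃ θ, IsUnitFlowBetween G A Z θ := by
  obtain ⟨W⟩ := h
  refine ⟨walkFlow W, walkFlow_antisymm W, walkFlow_support W, ?_, ?_⟩
  · intro x hxA hxZ
    have h1 : x ≠ a := fun hh => hxA (by rw [hh]; exact ha)
    have h2 : x ≠ z := fun hh => hxZ (by rw [hh]; exact hz)
    rw [walkFlow_div W x, if_neg h1, if_neg h2]
    ring
  · have : ∀ x ∈ A, ∑ y, walkFlow W x y = (if x = a then 1 else 0) - (if x = z then 1 else 0) :=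
      fun x _ => walkFlow_div W x
    rw [Finset.sum_congr rfl this, Finset.sum_sub_distrib]
    have e1 : ∑ x ∈ A, (if x = a then (1:ℝ) else 0) = 1 := by
      rw [Finset.sum_ite_eq' A a fun _ => (1:ℝ), if_pos ha]
    have e2 : ∑ x ∈ A, (if x = z then (1:ℝ) else 0) = 0 := by
      apply Finset.sum_eq_zero
      intro x hx
      exact if_neg fun hh => (Finset.disjoint_left.mp hAZ (hh ▸ hx)) hz
    rw [e1, e2]; ring

lemma unitFlow_energy_nonneg {G : SimpleGraph V} {r : Sym2 V → ℝ}
    (hr : ∀ e ∈ G.edgeSet, 0 < r e) {A Z : Finset V} {θ : V → V → ℝ}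
    (hθ : IsUnitFlowBetween G A Z θ) : 0 ≤ flowEnergy r θ := by
  obtain ⟨-, hsupp, -, -⟩ := hθ
  rw [flowEnergy]
  apply mul_nonneg (by norm_num)
  apply Finset.sum_nonneg; intro x _
  apply Finset.sum_nonneg; intro y _
  by_cases h0 : θ x y = 0
  · rw [h0]; simp
  · have hadj : G.Adj x y := by
      by_contra hadj
      exact h0 (hsupp x y hadj)
    exact mul_nonneg (sq_nonneg _) (hr s(x, y) ((SimpleGraph.mem_edgeSet G).mpr hadj)).le

lemma effRes_bddBelow {G : SimpleGraph V} {r : Sym2 V → ℝ}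
    (hr : ∀ e ∈ G.edgeSet, 0 < r e) (A Z : Finset V) :
    BddBelow (flowEnergy r '' {θ | IsUnitFlowBetween G A Z θ}) := by
  refine ⟨0, ?_⟩
  rintro x ⟨θ, hθ, rfl⟩
  exact unitFlow_energy_nonneg hr hθ

end AuxSeriesLaw

/-- **Generalized series law**: let `G` be a finite network, `H₁, …, Hₙ`
subgraphs of `G`, `Aᵢ, Zᵢ` disjoint vertex sets in `Hᵢ` (joined within `Hᵢ`),
and `A, Z` disjoint vertex sets in `G`.  Suppose that for every choice of paths
`Pᵢ` within `Hᵢ` connecting `Aᵢ` to `Zᵢ`, the union `⋃ᵢ Pᵢ` contains a path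
from `A` to `Z`.  Then `R_G(A, Z) ≤ ∑ᵢ R_{Hᵢ}(Aᵢ, Zᵢ)`. -/
theorem effRes_series_law {V : Type*} [Fintype V] [DecidableEq V]
    (G : SimpleGraph V) (r : Sym2 V → ℝ) (hr : ∀ e ∈ G.edgeSet, 0 < r e)
    (n : ℕ) (H : Fin n → SimpleGraph V) (hH : ∀ i, H i ≤ G)
    (A Z : Finset V) (hAZ : Disjoint A Z)
    (As Zs : Fin n → Finset V) (hAZs : ∀ i, Disjoint (As i) (Zs i))
    (hjoin : ∀ i, ∃ a z : V, a ∈ As i ∧ z ∈ Zs i ∧ (H i).Reachable a z)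
    (hpaths : ∀ (a z : Fin n → V) (P : ∀ i, (H i).Walk (a i) (z i)),
      (∀ i, (P i).IsPath) → (∀ i, a i ∈ As i) → (∀ i, z i ∈ Zs i) →
      ∃ (u w : V) (Q : G.Walk u w), u ∈ A ∧ w ∈ Z ∧
        ∀ e ∈ Q.edges, ∃ i, e ∈ (P i).edges) :
    effResBetween G r A Z ≤ ∑ i, effResBetween (H i) r (As i) (Zs i) := by
  classical
  rcases Nat.eq_zero_or_pos n with hn | hn
  · -- degenerate case `n = 0`: the hypotheses are contradictory
    exfalso
    subst hn
    obtain ⟨u, w', Q, hu, hw', hQ⟩ := hpaths (fun i => i.elim0) (fun i => i.elim0)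
      (fun i => i.elim0) (fun i => i.elim0) (fun i => i.elim0) (fun i => i.elim0)
    have hQe : Q.edges = [] := by
      apply List.eq_nil_iff_forall_not_mem.mpr
      intro e he
      obtain ⟨i, -⟩ := hQ e he
      exact i.elim0
    have hlen : Q.length = 0 := by
      rw [← SimpleGraph.Walk.length_edges, hQe]
      rfl
    have huw : u = w' := Q.eq_of_length_eq_zero hlen
    exact (Finset.disjoint_left.mp hAZ hu) (huw ▸ hw')
  · haveI : Nonempty (Fin n) := ⟨⟨0, hn⟩⟩
    have hn0 : (0:ℝ) < (n:ℝ) := by exact_mod_cast hn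
    -- it suffices to beat the RHS by every `ε > 0`
    apply le_of_forall_pos_le_add
    intro ε hε
    have hεn : 0 < ε / n := by positivity
    -- choose near-optimal unit flows in each `H i`
    have hne : ∀ i, (flowEnergy r '' {θ | IsUnitFlowBetween (H i) (As i) (Zs i) θ}).Nonempty := by
      intro i
      obtain ⟨a, z, ha, hz, hreach⟩ := hjoin i
      obtain ⟨θ0, hθ0⟩ := exists_unitFlow_of_reachable (hAZs i) ha hz hreach
      exact ⟨flowEnergy r θ0, θ0, hθ0, rfl⟩
    have hchoice : ∀ i, ∃ θ, IsUnitFlowBetween (H i) (As i) (Zs i) θ ∧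
        flowEnergy r θ < effResBetween (H i) r (As i) (Zs i) + ε / n := by
      intro i
      obtain ⟨x, hx, hlt⟩ := exists_lt_of_csInf_lt (hne i)
        (show sInf (flowEnergy r '' {θ | IsUnitFlowBetween (H i) (As i) (Zs i) θ}) <
          effResBetween (H i) r (As i) (Zs i) + ε / n from lt_add_of_pos_right _ hεn)
      obtain ⟨θ, hθ, rfl⟩ := hx
      exact ⟨θ, hθ, hlt⟩
    choose θ hθ hθE using hchoice
    have hθ' : ∀ i, (∀ x y, θ i x y = -θ i y x) ∧
        (∀ x y, ¬ (H i).Adj x y → θ i x y = 0) ∧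
        (∀ x, x ∉ As i → x ∉ Zs i → ∑ y, θ i x y = 0) ∧
        (∑ x ∈ As i, ∑ y, θ i x y = 1) := hθ
    -- capacities
    set w : V → V → ℝ := fun x y => Finset.univ.sup' Finset.univ_nonempty
      (fun i => |θ i x y|) with hwdef
    have hwle : ∀ i x y, |θ i x y| ≤ w x y := by
      intro i x y
      rw [hwdef]
      exact Finset.le_sup' (fun j => |θ j x y|) (Finset.mem_univ i)
    have hw0 : ∀ x y, 0 ≤ w x y := fun x y =>
      (abs_nonneg _).trans (hwle (Classical.arbitrary _) x y)
    have hwsymm : ∀ x y, w x y = w y x := by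
      intro x y
      apply le_antisymm <;>
      · apply Finset.sup'_le
        intro i _
        rw [(hθ' i).1]
        rw [abs_neg]
        exact hwle i _ _
    have hwG : ∀ x y, ¬ G.Adj x y → w x y = 0 := by
      intro x y hxy
      apply le_antisymm _ (hw0 x y)
      apply Finset.sup'_le
      intro i _
      rw [(hθ' i).2.1 x y (fun h => hxy (hH i h))]
      simp
    -- maximum flow and its min cut
    obtain ⟨f, S, hf1, hf2, hf3, hAS, hZS, hsat⟩ := exists_maxflow_cut w hw0 hwsymm A Z hAZ
    set SF : Finset V := Finset.univ.filter (· ∈ S) with hSFdef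
    have hSF : ∀ x, x ∈ SF ↔ x ∈ S := by
      intro x; rw [hSFdef, Finset.mem_filter]; simp
    set v : ℝ := ∑ x ∈ A, ∑ y, f x y with hvdef
    -- value of the flow equals the capacity of the cut
    have hASF : A ⊆ SF := fun x hx => (hSF x).mpr (hAS x hx)
    have hv : v = ∑ x ∈ SF, ∑ y ∈ SFᶜ, w x y := by
      have e1 : v = ∑ x ∈ SF, ∑ y, f x y := by
        rw [hvdef]
        apply Finset.sum_subset hASF
        intro x hxSF hxA
        have hxS : x ∈ S := (hSF x).mp hxSF
        have hxZ : x ∉ Z := fun hxZ => hZS x hxZ hxS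
        exact hf3 x hxA hxZ
      rw [e1, sum_div_eq_cross hf1 SF]
      apply Finset.sum_congr rfl
      intro x hx
      apply Finset.sum_congr rfl
      intro y hy
      exact hsat x y ((hSF x).mp hx) (fun hyS => (Finset.mem_compl.mp hy) ((hSF y).mpr hyS))
    -- the cut has capacity at least 1
    have hv1 : 1 ≤ v := by
      by_cases hcase : ∀ i, ∃ (a z : V) (P : (H i).Walk a z), P.IsPath ∧ a ∈ As i ∧ z ∈ Zs i ∧
          (∀ e ∈ P.edges, ∀ x y : V, e = s(x, y) → (x ∈ S ↔ y ∈ S))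
      · -- impossible: the avoiding paths would give an A-Z path avoiding the cut
        exfalso
        choose aa zz P hP haa hzz hNC using hcase
        obtain ⟨u, w', Q, hu, hw', hQ⟩ := hpaths aa zz P hP haa hzz
        have : w' ∈ S := by
          apply mem_S_of_walk S Q _ (hAS u hu)
          intro e he x y hxy
          obtain ⟨i, hei⟩ := hQ e he
          exact hNC i e hei x y hxy
        exact hZS w' hw' this
      · obtain ⟨i, hi⟩ := not_forall.mp hcase
        set K : SimpleGraph V :=
          { Adj := fun x y => (H i).Adj x y ∧ (x ∈ S ↔ y ∈ S)
            symm := ⟨fun x y h => ⟨h.1.symm, h.2.symm⟩⟩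
            loopless := ⟨fun x h => (H i).loopless.irrefl x h.1⟩ } with hKdef
        have hKadj : ∀ x y, K.Adj x y ↔ ((H i).Adj x y ∧ (x ∈ S ↔ y ∈ S)) := fun x y => Iff.rfl
        set T : Finset V := Finset.univ.filter (fun x => ∃ a ∈ As i, K.Reachable a x) with hTdef
        have hT : ∀ x, x ∈ T ↔ ∃ a ∈ As i, K.Reachable a x := by
          intro x; rw [hTdef, Finset.mem_filter]; simp
        have hAT : As i ⊆ T := fun x hx => (hT x).mpr ⟨x, hx, SimpleGraph.Reachable.refl x⟩
        have hZT : ∀ z ∈ Zs i, z ∉ T := by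
          intro z hz hzT
          obtain ⟨a, ha, hreach⟩ := (hT z).mp hzT
          obtain ⟨W⟩ := hreach
          apply hi
          set p := W.toPath with hpdef
          have hedges : ∀ e ∈ p.val.edges, e ∈ (H i).edgeSet := by
            intro e he
            have heK : e ∈ K.edgeSet := p.val.edges_subset_edgeSet he
            have hKH : K ≤ H i := by
              intro x y h
              exact ((hKadj x y).mp h).1
            exact SimpleGraph.edgeSet_mono hKH heK
          refine ⟨a, z, p.val.transfer (H i) hedges, SimpleGraph.Walk.IsPath.transfer _ p.2,
            ha, hz, ?_⟩
          intro e he x y hxy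
          rw [SimpleGraph.Walk.edges_transfer] at he
          have heK : e ∈ K.edgeSet := p.val.edges_subset_edgeSet he
          rw [hxy] at heK
          exact ((hKadj x y).mp ((SimpleGraph.mem_edgeSet K).mp heK)).2
        -- the unit flow `θ i` crosses the cut
        have h1T : ∑ x ∈ T, ∑ y, θ i x y = 1 := by
          rw [← (hθ' i).2.2.2]
          symm
          apply Finset.sum_subset hAT
          intro x hxT hxA
          exact (hθ' i).2.2.1 x hxA (fun hxZ => hZT x hxZ hxT)
        have h1c : ∑ x ∈ T, ∑ y ∈ Tᶜ, θ i x y = 1 := by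
          rw [← sum_div_eq_cross (hθ' i).1 T, h1T]
        have hcross : ∀ x ∈ T, ∀ y ∈ Tᶜ, θ i x y ≠ 0 →
            ((x ∈ SF ∧ y ∉ SF) ∨ (x ∉ SF ∧ y ∈ SF)) := by
          intro x hxT y hyT hθ0
          have hadj : (H i).Adj x y := by
            by_contra hadj
            exact hθ0 ((hθ' i).2.1 x y hadj)
          have hyT' : y ∉ T := Finset.mem_compl.mp hyT
          have hniff : ¬ (x ∈ S ↔ y ∈ S) := by
            intro hiff
            apply hyT'
            obtain ⟨a, ha, hreach⟩ := (hT x).mp hxT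
            exact (hT y).mpr ⟨a, ha, hreach.trans
              (SimpleGraph.Adj.reachable ((hKadj x y).mpr ⟨hadj, hiff⟩))⟩
          by_cases hxS : x ∈ S
          · left
            refine ⟨(hSF x).mpr hxS, fun hySF => hniff ⟨fun _ => (hSF y).mp hySF, fun _ => hxS⟩⟩
          · right
            have hyS : y ∈ S := by
              by_contra hyS
              exact hniff ⟨fun h => absurd h hxS, fun h => absurd h hyS⟩
            exact ⟨fun hxSF => hxS ((hSF x).mp hxSF), (hSF y).mpr hyS⟩
        calc (1:ℝ) = ∑ x ∈ T, ∑ y ∈ Tᶜ, θ i x y := h1c.symm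
          _ ≤ ∑ x ∈ SF, ∑ y ∈ SFᶜ, w x y :=
              cut_bound T SF (hθ' i).1 (hwle i) hw0 hcross
          _ = v := hv.symm
    have hv0 : (0:ℝ) < v := lt_of_lt_of_le one_pos hv1
    -- the normalized flow is a unit flow from A to Z in G
    set θs : V → V → ℝ := fun x y => f x y / v with hθsdef
    have hθsflow : IsUnitFlowBetween G A Z θs := by
      refine ⟨?_, ?_, ?_, ?_⟩
      · intro x y
        rw [hθsdef]
        simp only
        rw [hf1 x y]
        ring
      · intro x y hxy
        have : f x y = 0 := by
          have h1 := hf2 x y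
          rw [hwG x y hxy] at h1
          exact abs_eq_zero.mp (le_antisymm h1 (abs_nonneg _))
        rw [hθsdef]
        simp only
        rw [this, zero_div]
      · intro x hxA hxZ
        rw [hθsdef]
        simp only
        rw [← Finset.sum_div, hf3 x hxA hxZ, zero_div]
      · rw [hθsdef]
        simp only
        have : ∀ x ∈ A, ∑ y, f x y / v = (∑ y, f x y) / v := fun x _ => by
          rw [Finset.sum_div]
        rw [Finset.sum_congr rfl this, ← Finset.sum_div, ← hvdef, div_self (ne_of_gt hv0)]
    -- energy comparison
    have hEbound : flowEnergy r θs ≤ ∑ i, flowEnergy r (θ i) := by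
      have hpt : ∀ x y, (θs x y) ^ 2 * r s(x, y) ≤ ∑ i, (θ i x y) ^ 2 * r s(x, y) := by
        intro x y
        by_cases hall : ∀ i, θ i x y = 0
        · have hw00 : w x y = 0 := by
            apply le_antisymm _ (hw0 x y)
            apply Finset.sup'_le
            intro i _
            rw [hall i]
            simp
          have hf0 : f x y = 0 := by
            have h1 := hf2 x y
            rw [hw00] at h1
            exact abs_eq_zero.mp (le_antisymm h1 (abs_nonneg _))
          have : θs x y = 0 := by rw [hθsdef]; simp only; rw [hf0, zero_div]
          rw [this]
          have hz : ∀ i ∈ Finset.univ, (θ i x y) ^ 2 * r s(x, y) = 0 := fun i _ => by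
            rw [hall i]; ring
          rw [Finset.sum_eq_zero hz]
          norm_num
        · obtain ⟨j, hj⟩ := not_forall.mp hall
          have hadj : G.Adj x y := by
            by_contra hadj
            exact hj ((hθ' j).2.1 x y (fun h => hadj (hH j h)))
          have hrpos : 0 < r s(x, y) := hr s(x, y) ((SimpleGraph.mem_edgeSet G).mpr hadj)
          have h1 : (θs x y) ^ 2 ≤ (f x y) ^ 2 := by
            rw [hθsdef]
            simp only
            rw [div_pow]
            apply div_le_self (sq_nonneg _)
            nlinarith
          have h2 : (f x y) ^ 2 ≤ (w x y) ^ 2 := by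
            rw [← sq_abs (f x y)]
            exact pow_le_pow_left₀ (abs_nonneg _) (hf2 x y) 2
          obtain ⟨i0, -, hi0⟩ := Finset.exists_mem_eq_sup' (Finset.univ_nonempty)
            (fun i => |θ i x y|)
          have h3 : (w x y) ^ 2 ≤ ∑ i, (θ i x y) ^ 2 := by
            have : (w x y) ^ 2 = (θ i0 x y) ^ 2 := by
              rw [hwdef]
              simp only
              rw [hi0, sq_abs]
            rw [this]
            exact Finset.single_le_sum (f := fun i => (θ i x y) ^ 2)
              (fun i _ => sq_nonneg _) (Finset.mem_univ i0)
          calc (θs x y) ^ 2 * r s(x, y) ≤ (∑ i, (θ i x y) ^ 2) * r s(x, y) := by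
                apply mul_le_mul_of_nonneg_right _ hrpos.le
                exact h1.trans (h2.trans h3)
            _ = ∑ i, (θ i x y) ^ 2 * r s(x, y) := Finset.sum_mul _ _ _
      calc flowEnergy r θs = (1/2) * ∑ x, ∑ y, (θs x y) ^ 2 * r s(x, y) := rfl
        _ ≤ (1/2) * ∑ x, ∑ y, ∑ i, (θ i x y) ^ 2 * r s(x, y) := by
            apply mul_le_mul_of_nonneg_left _ (by norm_num)
            exact Finset.sum_le_sum fun x _ => Finset.sum_le_sum fun y _ => hpt x y
        _ = ∑ i, flowEnergy r (θ i) := by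
            have e1 : ∑ x, ∑ y, ∑ i, (θ i x y) ^ 2 * r s(x, y)
                = ∑ i, ∑ x, ∑ y, (θ i x y) ^ 2 * r s(x, y) := by
              calc ∑ x, ∑ y, ∑ i, (θ i x y) ^ 2 * r s(x, y)
                  = ∑ x, ∑ i, ∑ y, (θ i x y) ^ 2 * r s(x, y) :=
                    Finset.sum_congr rfl (fun x _ => Finset.sum_comm)
                _ = ∑ i, ∑ x, ∑ y, (θ i x y) ^ 2 * r s(x, y) := Finset.sum_comm
            rw [e1, Finset.mul_sum]
            exact Finset.sum_congr rfl fun i _ => rfl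
    -- conclude
    have hfinal : effResBetween G r A Z ≤ flowEnergy r θs :=
      csInf_le (effRes_bddBelow hr A Z) ⟨θs, hθsflow, rfl⟩
    calc effResBetween G r A Z ≤ flowEnergy r θs := hfinal
      _ ≤ ∑ i, flowEnergy r (θ i) := hEbound
      _ ≤ ∑ i, (effResBetween (H i) r (As i) (Zs i) + ε / n) :=
          Finset.sum_le_sum fun i _ => (hθE i).le
      _ = (∑ i, effResBetween (H i) r (As i) (Zs i)) + ε := by
          rw [Finset.sum_add_distrib, Finset.sum_const, Finset.card_univ, Fintype.card_fin,
            nsmul_eq_mul, mul_div_cancel₀ ε (ne_of_gt hn0)]
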